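/- The distribution q(x;t) = w(x;t) / Σ_{y∈S} w(y;t) is the stationary distribution of the instantaneous Green's function Monte Carlo transition probability G1(·,·;t): Σ_{x∈S} G1(y,x;t) q(x;t) = q(y;t) for all y ∈ S. Moreover, if E0(x) = −Σ_{⟨ij⟩} J_ij x_i x_j (so that Σ_{x∈S} E0(x) = 0), it has the explicit form q(x;t) = 2^{−N} − Δt·E0(x) / (2^N · (1 + Δt·E_T + N·Δt·Γ(t))). -/

import Mathlib

open Finset Filter

namespace QAPaper

variable {S : Type*}

/-- A probability distribution on the finite state space `S`, viewed as a vector. -/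
def IsProbVec [Fintype S] (p : S → ℝ) : Prop :=
  (∀ x, 0 ≤ p x) ∧ ∑ x, p x = 1

/-- The ℓ¹ norm distance `‖p - p'‖ = ∑ₓ |p(x) - p'(x)|`. -/
noncomputable def dist1 [Fintype S] (p p' : S → ℝ) : ℝ := ∑ x, |p x - p' x|

/-- A column-stochastic matrix: entries nonnegative, columns sum to one. -/
def IsStochastic [Fintype S] (G : Matrix S S ℝ) : Prop :=
  (∀ y x, 0 ≤ G y x) ∧ ∀ x, ∑ y, G y x = 1

/-- `prodG G t t0 = G (t-1) * G (t-2) * ⋯ * G t0`. -/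
noncomputable def prodG [Fintype S] [DecidableEq S] (G : ℕ → Matrix S S ℝ) (t t0 : ℕ) :
    Matrix S S ℝ :=
  (((List.range (t - t0)).map fun k => G (t0 + k)).reverse).prod

/-- Weak ergodicity: the distribution forgets its initial condition. -/
def WeaklyErgodic [Fintype S] [DecidableEq S] (G : ℕ → Matrix S S ℝ) : Prop :=
  ∀ t0 : ℕ, ∀ ε > (0 : ℝ), ∃ T : ℕ, ∀ t ≥ T,
    ∀ p0 p0' : S → ℝ, IsProbVec p0 → IsProbVec p0' →
      dist1 ((prodG G t t0).mulVec p0) ((prodG G t t0).mulVec p0') ≤ ε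

/-- Strong ergodicity towards a fixed distribution `r`. -/
def StronglyErgodicTo [Fintype S] [DecidableEq S] (G : ℕ → Matrix S S ℝ) (r : S → ℝ) : Prop :=
  ∀ t0 : ℕ, ∀ ε > (0 : ℝ), ∃ T : ℕ, ∀ t ≥ T,
    ∀ p0 : S → ℝ, IsProbVec p0 → dist1 ((prodG G t t0).mulVec p0) r ≤ ε

/-- Strong ergodicity. -/
def StronglyErgodic [Fintype S] [DecidableEq S] (G : ℕ → Matrix S S ℝ) : Prop :=
  ∃ r : S → ℝ, IsProbVec r ∧ StronglyErgodicTo G r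

/-- The coefficient of ergodicity `α(G)`. -/
noncomputable def ergCoeff [Fintype S] [Nonempty S] (G : Matrix S S ℝ) : ℝ :=
  1 - Finset.univ.inf' Finset.univ_nonempty fun p : S × S => ∑ z, min (G z p.1) (G z p.2)

/-- A generation probability: symmetric, vanishing on the diagonal, columns summing
to one, and irreducible. -/
structure IsGenProb [Fintype S] (P : S → S → ℝ) : Prop where
  symm : ∀ x y, P y x = P x y
  nonneg : ∀ x y, 0 ≤ P y x
  diag_zero : ∀ x, P x x = 0
  sum_one : ∀ x, ∑ y, P y x = 1
  irreducible : ∀ x y : S, ∃ n > 0, ∃ z : ℕ → S,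
    z 0 = x ∧ z n = y ∧ ∀ k < n, 0 < P (z (k + 1)) (z k)

/-- An acceptance function: monotone increasing, valued in `[0,1]`,
with `g (1/u) = g u / u`. -/
structure IsAcceptFn (g : ℝ → ℝ) : Prop where
  mono : MonotoneOn g (Set.Ici (0 : ℝ))
  maps : ∀ u : ℝ, 0 ≤ u → g u ∈ Set.Icc (0 : ℝ) 1
  ratio : ∀ u : ℝ, 0 < u → g (1 / u) = g u / u

/-- Partition function `Z(t)`. -/
noncomputable def Zfun [Fintype S] (F0 F1 : S → ℝ) (T0 : ℝ) (T1 : ℕ → ℝ) (t : ℕ) : ℝ :=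
  ∑ x, Real.exp (-(F0 x) / T0 - F1 x / T1 t)

/-- Time-dependent Boltzmann distribution `q(x;t)`. -/
noncomputable def qB [Fintype S] (F0 F1 : S → ℝ) (T0 : ℝ) (T1 : ℕ → ℝ) (t : ℕ) (x : S) : ℝ :=
  Real.exp (-(F0 x) / T0 - F1 x / T1 t) / Zfun F0 F1 T0 T1 t

/-- Transition matrix built from a generation probability `P` and an
acceptance probability `A`. -/
noncomputable def GmatOf [Fintype S] [DecidableEq S] (P : S → S → ℝ) (A : ℕ → S → S → ℝ)
    (t : ℕ) : Matrix S S ℝ :=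
  Matrix.of fun y x => if y = x then 1 - ∑ z, P z x * A t z x else P y x * A t y x

/-- Transition matrix of path-integral Monte Carlo quantum annealing. -/
noncomputable def Gpimc [Fintype S] [DecidableEq S] (P : S → S → ℝ) (g : ℝ → ℝ)
    (F0 F1 : S → ℝ) (T0 : ℝ) (T1 : ℕ → ℝ) : ℕ → Matrix S S ℝ :=
  GmatOf P fun t y x => g (qB F0 F1 T0 T1 t y / qB F0 F1 T0 T1 t x)

/-- The set `S_m` of local maxima of `F1` with respect to `P`. -/
def Sm [Fintype S] (P : S → S → ℝ) (F1 : S → ℝ) : Set S :=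
  {x | ∀ y, 0 < P y x → F1 y ≤ F1 x}

/-- `x` can reach `y` in exactly `n` elementary transitions. -/
def ReachIn (P : S → S → ℝ) (n : ℕ) (x y : S) : Prop :=
  ∃ f : ℕ → S, f 0 = x ∧ f n = y ∧ ∀ k < n, 0 < P (f (k + 1)) (f k)

/-- `d(y,x)`: the minimum number of transitions needed to go from `x` to `y`. -/
noncomputable def dSteps (P : S → S → ℝ) (x y : S) : ℕ :=
  sInf {n | ReachIn P n x y}

/-- `R = min { max { d(y,x) | y ∈ S } | x ∈ S \ S_m }`. -/
noncomputable def Rnum [Fintype S] (P : S → S → ℝ) (F1 : S → ℝ) : ℕ :=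
  sInf {r | ∃ x, x ∉ Sm P F1 ∧ r = Finset.univ.sup fun y => dSteps P x y}

/-- The maximum change of `F` in a single transition. -/
noncomputable def Lmax [Fintype S] (P : S → S → ℝ) (F : S → ℝ) : ℝ :=
  sSup {v | ∃ x y : S, 0 < P y x ∧ v = |F x - F y|}

/-- The minimum nonvanishing value of the generation probability. -/
noncomputable def wmin [Fintype S] (P : S → S → ℝ) : ℝ :=
  sInf {v | ∃ x y : S, 0 < P y x ∧ v = P y x}

/-- The set of global minima of `F1`. -/
def S1min [Fintype S] (F1 : S → ℝ) : Set S := {x | ∀ y, F1 x ≤ F1 y}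

/-- The limiting distribution: proportional to `exp (-F0 x / T0)` on the set of
global minima of `F1`, and zero elsewhere. -/
noncomputable def rLimit [Fintype S] (F0 F1 : S → ℝ) (T0 : ℝ) (x : S) : ℝ :=
  if ∀ y, F1 x ≤ F1 y then
    Real.exp (-(F0 x) / T0) /
      ∑ y ∈ Finset.univ.filter (fun y => ∀ z, F1 y ≤ F1 z), Real.exp (-(F0 y) / T0)
  else 0

/-- The ±1 value of a Boolean spin. -/
noncomputable def spin (b : Bool) : ℝ := if b then 1 else -1

/-- Classical Ising energy `E0(x) = -∑_{i<j} J_ij x_i x_j`. -/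
noncomputable def E0def (N : ℕ) (J : Fin N → Fin N → ℝ) (x : Fin N → Bool) : ℝ :=
  -∑ p ∈ Finset.univ.filter (fun p : Fin N × Fin N => p.1 < p.2),
    J p.1 p.2 * spin (x p.1) * spin (x p.2)

/-- Hamming distance between spin configurations. -/
def hamming (N : ℕ) (x y : Fin N → Bool) : ℕ :=
  (Finset.univ.filter fun i => x i ≠ y i).card

/-- GFMC weight `w(x;t) = 1 - Δt (E0(x) - E_T) + N Δt Γ(t)`. -/
noncomputable def wgt (N : ℕ) (J : Fin N → Fin N → ℝ) (Δt ET : ℝ) (Γ : ℕ → ℝ) (t : ℕ)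
    (x : Fin N → Bool) : ℝ :=
  1 - Δt * (E0def N J x - ET) + N * Δt * Γ t

/-- The normalized GFMC transition probability `G1(y,x;t)`. -/
noncomputable def G1mat (N : ℕ) (J : Fin N → Fin N → ℝ) (Δt ET : ℝ) (Γ : ℕ → ℝ) (t : ℕ) :
    Matrix (Fin N → Bool) (Fin N → Bool) ℝ :=
  Matrix.of fun y x =>
    if y = x then 1 - N * Δt * Γ t / wgt N J Δt ET Γ t x
    else if hamming N x y = 1 then Δt * Γ t / wgt N J Δt ET Γ t x
    else 0

/-- `E_min = min { E0(x) | x ∈ S }`. -/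
noncomputable def Emin (N : ℕ) (J : Fin N → Fin N → ℝ) : ℝ :=
  Finset.univ.inf' Finset.univ_nonempty (E0def N J)

/-- Stationary distribution `q(x;t) = w(x;t) / ∑_y w(y;t)` of GFMC. -/
noncomputable def qGFMC (N : ℕ) (J : Fin N → Fin N → ℝ) (Δt ET : ℝ) (Γ : ℕ → ℝ) (t : ℕ)
    (x : Fin N → Bool) : ℝ :=
  wgt N J Δt ET Γ t x / ∑ y, wgt N J Δt ET Γ t y

/-- The alternative GFMC transition probability `G2(y,x;t)`. -/
noncomputable def G2mat (N : ℕ) (Δt : ℝ) (Γ : ℕ → ℝ) (t : ℕ) :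
    Matrix (Fin N → Bool) (Fin N → Bool) ℝ :=
  Matrix.of fun y x =>
    (Real.cosh (Δt * Γ t) * Real.exp (-(Δt * Γ t))) ^ N *
      Real.tanh (Δt * Γ t) ^ hamming N x y

/-- Inverse hyperbolic tangent. -/
noncomputable def artanh (x : ℝ) : ℝ := (1 / 2) * Real.log ((1 + x) / (1 - x))

/-- The cost function of the Suzuki–Trotter representation of the TFIM:
`F0(x) = -(β/M) ∑_k ∑_{ij} J_ij S_i^(k) S_j^(k)`. -/
noncomputable def F0tfim (N M : ℕ) (β : ℝ) (J : Fin (N + 1) → Fin (N + 1) → ℝ)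
    (x : Fin (N + 1) × Fin M → Bool) : ℝ :=
  -(β / M) * ∑ k : Fin M, ∑ i : Fin (N + 1), ∑ j : Fin (N + 1),
    J i j * spin (x (i, k)) * spin (x (j, k))

/-- The kinetic term of the Suzuki–Trotter representation of the TFIM:
`F1(x) = -∑_k ∑_i S_i^(k) S_i^(k+1)` with periodic boundary along the Trotter direction. -/
noncomputable def F1tfim (N M : ℕ) [NeZero M] (x : Fin (N + 1) × Fin M → Bool) : ℝ :=
  -∑ k : Fin M, ∑ i : Fin (N + 1), spin (x (i, k)) * spin (x (i, k + 1))

/-- The ferromagnetic coupling `γ(t) = (1/2) log coth (β Γ(t) / M)` between Trotter slices. -/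
noncomputable def γtfim (M : ℕ) (β : ℝ) (Γ : ℕ → ℝ) (t : ℕ) : ℝ :=
  (1 / 2) * Real.log (1 / Real.tanh (β * Γ t / M))

/-- Tsallis-type generalized acceptance ratio `u(y,x;t)`. -/
noncomputable def uGen {S : Type*} (F0 F1 : S → ℝ) (T0 : ℝ) (T1 : ℕ → ℝ) (qp : ℝ) (t : ℕ)
    (y x : S) : ℝ :=
  Real.exp (-(F0 y - F0 x) / T0) *
    (1 + (qp - 1) * (F1 y - F1 x) / T1 t) ^ (1 / (1 - qp))


lemma sum_spin_mul (N : ℕ) (i j : Fin N) (hij : i ≠ j) :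
    ∑ x : Fin N → Bool, spin (x i) * spin (x j) = 0 := by
  apply Finset.sum_ninvolution (fun x => Function.update x i (!(x i)))
  · intro x
    have hj : Function.update x i (!(x i)) j = x j := Function.update_of_ne (Ne.symm hij) _ _
    have hi : Function.update x i (!(x i)) i = !(x i) := Function.update_self _ _ _
    rw [hi, hj]
    cases x i <;> cases x j <;> norm_num [spin]
  · intro x _
    intro h
    have := congrFun h i
    rw [Function.update_self] at this
    cases x i <;> simp at this
  · intro x; exact Finset.mem_univ _
  · intro x
    funext k
    by_cases hk : k = i
    · subst hk
      simp [Function.update_self]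
    · simp [Function.update_of_ne hk]

lemma sum_E0_zero (N : ℕ) (J : Fin N → Fin N → ℝ) :
    ∑ x : Fin N → Bool, E0def N J x = 0 := by
  unfold E0def
  rw [Finset.sum_neg_distrib, neg_eq_zero]
  rw [Finset.sum_comm]
  apply Finset.sum_eq_zero
  intro p hp
  simp only [Finset.mem_filter] at hp
  have hij : p.1 ≠ p.2 := ne_of_lt hp.2
  calc ∑ x : Fin N → Bool, J p.1 p.2 * spin (x p.1) * spin (x p.2)
      = J p.1 p.2 * ∑ x : Fin N → Bool, spin (x p.1) * spin (x p.2) := by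
        rw [Finset.mul_sum]; congr 1; funext x; ring
    _ = 0 := by rw [sum_spin_mul N p.1 p.2 hij, mul_zero]

lemma wgt_pos (N : ℕ) (hN : 0 < N) (J : Fin N → Fin N → ℝ) (Δt ET : ℝ) (hΔt : 0 < Δt)
    (hET : ∀ x : Fin N → Bool, 0 ≤ 1 - Δt * (E0def N J x - ET))
    (Γ : ℕ → ℝ) (hΓpos : ∀ t, 0 < Γ t) (t : ℕ) (x : Fin N → Bool) :
    0 < wgt N J Δt ET Γ t x := by
  unfold wgt
  have h1 := hET x
  have hNr : (0 : ℝ) < N := by exact_mod_cast hN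
  have h2 : 0 < (N : ℝ) * Δt * Γ t := mul_pos (mul_pos hNr hΔt) (hΓpos t)
  linarith

lemma card_hamming_one (N : ℕ) (y : Fin N → Bool) :
    (Finset.univ.filter fun x => hamming N x y = 1).card = N := by
  have himg : (Finset.univ.filter fun x => hamming N x y = 1) =
      Finset.univ.image (fun i : Fin N => Function.update y i (!(y i))) := by
    ext x
    simp only [Finset.mem_filter, Finset.mem_univ, true_and, Finset.mem_image]
    constructor
    · intro hx
      obtain ⟨i, hi⟩ := Finset.card_eq_one.mp hx
      refine ⟨i, ?_⟩
      have hmem : ∀ j : Fin N, x j ≠ y j ↔ j = i := by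
        intro j
        constructor
        · intro hj
          have : j ∈ Finset.univ.filter fun k => x k ≠ y k := by
            simp [hj]
          rw [hi] at this; simpa using this
        · intro hj; subst hj
          have : j ∈ ({j} : Finset (Fin N)) := Finset.mem_singleton_self j
          rw [← hi] at this
          simpa using this
      funext j
      by_cases hj : j = i
      · subst hj
        have : x j ≠ y j := (hmem j).mpr rfl
        rw [Function.update_self]
        cases hxj : x j <;> cases hyj : y j <;> simp_all
      · have : ¬ (x j ≠ y j) := fun h => hj ((hmem j).mp h)
        push_neg at this
        rw [Function.update_of_ne hj, this]
    · rintro ⟨i, rfl⟩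
      unfold hamming
      have : (Finset.univ.filter fun j => Function.update y i (!(y i)) j ≠ y j) = {i} := by
        ext j
        simp only [Finset.mem_filter, Finset.mem_univ, true_and, Finset.mem_singleton]
        by_cases hj : j = i
        · subst hj
          simp [Function.update_self]
        · simp [Function.update_of_ne hj, hj]
      rw [this, Finset.card_singleton]
  rw [himg, Finset.card_image_of_injective _ ?_, Finset.card_univ, Fintype.card_fin]
  intro i j hij
  by_contra hne
  have hi : Function.update y i (!(y i)) i = Function.update y j (!(y j)) i := congrFun hij i
  rw [Function.update_self, Function.update_of_ne hne] at hi
  cases y i <;> simp at hi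

lemma sum_wgt (N : ℕ) (J : Fin N → Fin N → ℝ) (Δt ET : ℝ) (Γ : ℕ → ℝ) (t : ℕ) :
    ∑ y : Fin N → Bool, wgt N J Δt ET Γ t y =
      2 ^ N * (1 + Δt * ET + N * Δt * Γ t) := by
  unfold wgt
  have hsum := sum_E0_zero N J
  have hcard : (Finset.univ : Finset (Fin N → Bool)).card = 2 ^ N := by
    simp [Finset.card_univ, Fintype.card_fun]
  rw [show (fun y => 1 - Δt * (E0def N J y - ET) + ↑N * Δt * Γ t) =
      (fun y => (1 + Δt * ET + ↑N * Δt * Γ t) + (-Δt) * E0def N J y) by funext y; ring]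
  rw [Finset.sum_add_distrib, ← Finset.mul_sum, hsum, Finset.sum_const, hcard]
  ring

/-- `q(x;t) = w(x;t)/∑_y w(y;t)` is the stationary distribution of
the instantaneous GFMC transition probability, and it has the explicit form
`q(x;t) = 2^{-N} - Δt E0(x) / (2^N (1 + Δt E_T + N Δt Γ(t)))`. -/
theorem gfmc_stationary_distribution
    (N : ℕ) (hN : 0 < N) (J : Fin N → Fin N → ℝ)
    (Δt ET : ℝ) (hΔt : 0 < Δt)
    (hET : ∀ x : Fin N → Bool, 0 ≤ 1 - Δt * (E0def N J x - ET))
    (Γ : ℕ → ℝ) (hΓpos : ∀ t, 0 < Γ t) (hΓanti : Antitone Γ)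
    (hΓlim : Tendsto Γ atTop (nhds 0)) :
    (∀ t : ℕ, (G1mat N J Δt ET Γ t).mulVec (qGFMC N J Δt ET Γ t) = qGFMC N J Δt ET Γ t) ∧
      ∀ t : ℕ, ∀ x : Fin N → Bool,
        qGFMC N J Δt ET Γ t x =
          ((2 : ℝ) ^ N)⁻¹ -
            Δt * E0def N J x / (2 ^ N * (1 + Δt * ET + N * Δt * Γ t)) := by
  have hw := wgt_pos N hN J Δt ET hΔt hET Γ hΓpos
  have hZpos : ∀ t, 0 < ∑ y : Fin N → Bool, wgt N J Δt ET Γ t y := fun t =>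
    Finset.sum_pos (fun y _ => hw t y) Finset.univ_nonempty
  have hc : ∀ t, 0 < 1 + Δt * ET + (N : ℝ) * Δt * Γ t := by
    intro t
    have h := hZpos t
    rw [sum_wgt] at h
    nlinarith [pow_pos (show (0:ℝ) < 2 by norm_num) N]
  constructor
  · intro t
    funext y
    have hZne : (∑ z : Fin N → Bool, wgt N J Δt ET Γ t z) ≠ 0 := ne_of_gt (hZpos t)
    have key : ∀ x : Fin N → Bool,
        G1mat N J Δt ET Γ t y x * qGFMC N J Δt ET Γ t x =
          ((if y = x then wgt N J Δt ET Γ t y - N * Δt * Γ t else 0) +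
            (if hamming N x y = 1 then Δt * Γ t else 0)) /
            ∑ z : Fin N → Bool, wgt N J Δt ET Γ t z := by
      intro x
      have hwx : wgt N J Δt ET Γ t x ≠ 0 := ne_of_gt (hw t x)
      unfold G1mat qGFMC
      by_cases hxy : y = x
      · subst hxy
        have hh : hamming N y y = 0 := by simp [hamming]
        simp only [Matrix.of_apply, if_pos rfl, hh]
        norm_num
        field_simp
      · simp only [Matrix.of_apply, if_neg hxy]
        by_cases hham : hamming N x y = 1
        · simp only [if_pos hham]
          field_simp
          ring
        · simp only [if_neg hham]
          simp
    have hmv : (G1mat N J Δt ET Γ t).mulVec (qGFMC N J Δt ET Γ t) y =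
        ∑ x : Fin N → Bool, G1mat N J Δt ET Γ t y x * qGFMC N J Δt ET Γ t x := rfl
    rw [hmv]
    simp only [key]
    rw [← Finset.sum_div, Finset.sum_add_distrib]
    rw [Finset.sum_ite_eq]
    simp only [Finset.mem_univ, if_pos]
    rw [← Finset.sum_filter, Finset.sum_const, card_hamming_one N y]
    unfold qGFMC
    congr 1
    push_cast [nsmul_eq_mul]
    ring
  · intro t x
    unfold qGFMC
    rw [sum_wgt]
    have h2 : ((2 : ℝ) ^ N) ≠ 0 := by positivity
    have hcne : (1 + Δt * ET + (N : ℝ) * Δt * Γ t) ≠ 0 := ne_of_gt (hc t)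
    unfold wgt
    rw [eq_sub_iff_add_eq, ← add_div, div_eq_iff (mul_ne_zero h2 hcne), inv_mul_cancel_left₀ h2]
    ring

end QAPaper
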